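/- For any c ≥ 1 and β ∈ (0,1), W(c, β, 𝒟, P) ≤ G(β, 𝒟, P), where G(β, 𝒟, P) is the optimal value of max over unit vectors p_1,...,p_P ∈ ℝ^D of E_u[max_{j∈[P]} ⟨u, p_j⟩]. -/

import Mathlib

open MeasureTheory Finset
open scoped RealInnerProductSpace

/-- Probability that producer `j` wins a user `u`. -/
noncomputable def winProb {D P : ℕ} (p : Fin P → EuclideanSpace ℝ (Fin D))
    (j : Fin P) (u : EuclideanSpace ℝ (Fin D)) : ℝ :=
  let A := Finset.univ.filter (fun j' : Fin P => ∀ j'' : Fin P, ⟪u, p j''⟫ ≤ ⟪u, p j'⟫)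
  if j ∈ A then (A.card : ℝ)⁻¹ else 0

/-- The optimal value `W(c, β, 𝒟, P)` of the constrained welfare program (5). -/
noncomputable def W (D P : ℕ) (c β : ℝ)
    (μ : Measure (EuclideanSpace ℝ (Fin D))) : ℝ :=
  sSup { w | ∃ p : Fin P → EuclideanSpace ℝ (Fin D),
    (∀ j i, 0 ≤ p j i) ∧
    (∀ j, ‖p j‖ ≤ β ^ (1 / c) * (∫ u, winProb p j u ∂μ) ^ (1 / c)) ∧
    w = ∫ u, ⨆ j, ⟪u, p j⟫ ∂μ }

/-- The optimal value `G(β, 𝒟, P)` of the unit-norm welfare program (6). -/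
noncomputable def G (D P : ℕ) (β : ℝ)
    (μ : Measure (EuclideanSpace ℝ (Fin D))) : ℝ :=
  sSup { w | ∃ p : Fin P → EuclideanSpace ℝ (Fin D),
    (∀ j, ‖p j‖ = 1) ∧ w = ∫ u, ⨆ j, ⟪u, p j⟫ ∂μ }

lemma winProb_mem_Icc {D P : ℕ} (p : Fin P → EuclideanSpace ℝ (Fin D))
    (j : Fin P) (u : EuclideanSpace ℝ (Fin D)) : winProb p j u ∈ Set.Icc (0:ℝ) 1 := by
  unfold winProb
  set A := Finset.univ.filter
      (fun j' : Fin P => ∀ j'' : Fin P, ⟪u, p j''⟫ ≤ ⟪u, p j'⟫) with hA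
  by_cases h : j ∈ A
  · rw [if_pos h]
    have hcard : (1:ℝ) ≤ (A.card : ℝ) := by
      exact_mod_cast Finset.card_pos.mpr ⟨j, h⟩
    exact ⟨inv_nonneg.mpr (by linarith), inv_le_one_of_one_le₀ hcard⟩
  · rw [if_neg h]; exact ⟨le_refl _, zero_le_one⟩

lemma continuous_sup_inner {D P : ℕ} [Nonempty (Fin P)]
    (q : Fin P → EuclideanSpace ℝ (Fin D)) :
    Continuous fun u : EuclideanSpace ℝ (Fin D) => ⨆ j, ⟪u, q j⟫ := by
  have h : ∀ u : EuclideanSpace ℝ (Fin D),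
      (⨆ j, ⟪u, q j⟫) = Finset.univ.sup' Finset.univ_nonempty (fun j => ⟪u, q j⟫) := by
    intro u; rw [Finset.sup'_univ_eq_ciSup]
  simp only [h]
  exact Continuous.finset_sup'_apply Finset.univ_nonempty
    (fun j _ => continuous_id.inner continuous_const)

/-- Lemma D.2: `W(c, β, 𝒟, P) ≤ G(β, 𝒟, P)` for any `c ≥ 1` and `β ∈ (0,1)`. -/
theorem W_le_G (D P : ℕ) (hD : 1 ≤ D) (hP : 1 ≤ P) (c β : ℝ)
    (hc : 1 ≤ c) (hβ : β ∈ Set.Ioo (0:ℝ) 1)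
    (μ : Measure (EuclideanSpace ℝ (Fin D))) [IsProbabilityMeasure μ]
    (hsupp : ∀ᵐ u ∂μ, ‖u‖ = 1 ∧ ∀ i, 0 ≤ u i) :
    W D P c β μ ≤ G D P β μ := by
  classical
  obtain ⟨hβ0, hβ1⟩ := hβ
  haveI : Nonempty (Fin P) := ⟨⟨0, hP⟩⟩
  have i0 : Fin D := ⟨0, hD⟩
  have h1c : 0 ≤ 1 / c := by positivity
  set SG := { w | ∃ p : Fin P → EuclideanSpace ℝ (Fin D),
    (∀ j, ‖p j‖ = 1) ∧ w = ∫ u, ⨆ j, ⟪u, p j⟫ ∂μ } with hSG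
  -- a.e. bound on sup of inner products with unit vectors
  have haebound : ∀ q : Fin P → EuclideanSpace ℝ (Fin D), (∀ j, ‖q j‖ ≤ 1) →
      ∀ᵐ u ∂μ, ‖⨆ j, ⟪u, q j⟫‖ ≤ 1 := by
    intro q hq
    filter_upwards [hsupp] with u hu
    have habs : ∀ j, |⟪u, q j⟫| ≤ 1 := by
      intro j
      calc |⟪u, q j⟫| ≤ ‖u‖ * ‖q j‖ := abs_real_inner_le_norm u (q j)
        _ ≤ 1 := by rw [hu.1, one_mul]; exact hq j
    rw [Real.norm_eq_abs, abs_le]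
    constructor
    · refine le_trans ?_ (le_ciSup (Set.Finite.bddAbove (Set.finite_range _))
        (Classical.arbitrary (Fin P)))
      exact neg_le_of_abs_le (habs _)
    · exact ciSup_le fun j => le_of_abs_le (habs j)
  -- the feasible set of `G` is bounded above
  have hbddG : BddAbove SG := by
    refine ⟨1, ?_⟩
    rintro w ⟨q, hq, rfl⟩
    have hb := haebound q (fun j => (hq j).le)
    have := norm_integral_le_of_norm_le_const (C := 1) hb (μ := μ)
    simp only [Measure.real, measure_univ, ENNReal.toReal_one, mul_one] at this
    exact (le_abs_self _).trans (by rwa [Real.norm_eq_abs] at this)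
  -- `G` is nonnegative
  have hG0 : (0:ℝ) ≤ G D P β μ := by
    set q0 : Fin P → EuclideanSpace ℝ (Fin D) := fun _ => EuclideanSpace.single i0 (1:ℝ)
    have hmem : (∫ u, ⨆ j, ⟪u, q0 j⟫ ∂μ) ∈ SG := by
      refine ⟨q0, fun j => by simp [q0], rfl⟩
    have hval : (0:ℝ) ≤ ∫ u, ⨆ j, ⟪u, q0 j⟫ ∂μ := by
      refine integral_nonneg_of_ae ?_
      filter_upwards [hsupp] with u hu
      simp only [Pi.zero_apply]
      refine le_ciSup_of_le (Set.Finite.bddAbove (Set.finite_range _))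
        (Classical.arbitrary (Fin P)) ?_
      have h1 : ⟪u, EuclideanSpace.single i0 (1:ℝ)⟫ = u i0 := by
        rw [EuclideanSpace.inner_single_right]; simp
      simpa [q0, h1] using hu.2 i0
    exact hval.trans (le_csSup hbddG hmem)
  refine Real.sSup_le ?_ hG0
  rintro w ⟨p, hpos, hcon, rfl⟩
  -- each `p j` has norm at most 1
  have hnorm : ∀ j, ‖p j‖ ≤ 1 := by
    intro j
    have hI0 : 0 ≤ ∫ u, winProb p j u ∂μ :=
      integral_nonneg fun u => (winProb_mem_Icc p j u).1
    have hI1 : ∫ u, winProb p j u ∂μ ≤ 1 := by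
      have := integral_mono_of_nonneg (μ := μ) (f := fun u => winProb p j u)
        (g := fun _ => (1:ℝ)) (ae_of_all _ fun u => (winProb_mem_Icc p j u).1)
        (integrable_const 1) (ae_of_all _ fun u => (winProb_mem_Icc p j u).2)
      simpa using this
    calc ‖p j‖ ≤ β ^ (1 / c) * (∫ u, winProb p j u ∂μ) ^ (1 / c) := hcon j
      _ ≤ 1 := mul_le_one₀ (Real.rpow_le_one hβ0.le hβ1.le h1c)
          (Real.rpow_nonneg hI0 _) (Real.rpow_le_one hI0 hI1 h1c)
  -- rescale to unit vectors
  set q : Fin P → EuclideanSpace ℝ (Fin D) := fun j =>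
    if h : p j = 0 then EuclideanSpace.single i0 (1:ℝ) else ‖p j‖⁻¹ • p j with hqdef
  have hq1 : ∀ j, ‖q j‖ = 1 := by
    intro j
    by_cases h : p j = 0
    · simp [hqdef, h]
    · have hn : ‖p j‖ ≠ 0 := norm_ne_zero_iff.mpr h
      simp [hqdef, h, norm_smul, abs_of_nonneg (inv_nonneg.mpr (norm_nonneg (p j))),
        inv_mul_cancel₀ hn]
  -- pointwise comparison a.e.
  have hle : ∀ᵐ u ∂μ, (⨆ j, ⟪u, p j⟫) ≤ ⨆ j, ⟪u, q j⟫ := by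
    filter_upwards [hsupp] with u hu
    refine ciSup_mono (Set.Finite.bddAbove (Set.finite_range _)) ?_
    intro j
    have hup : 0 ≤ ⟪u, p j⟫ := by
      rw [PiLp.inner_apply]
      exact Finset.sum_nonneg fun i _ => by
        simpa using mul_nonneg (hpos j i) (hu.2 i)
    by_cases h : p j = 0
    · have : ⟪u, q j⟫ = u i0 := by
        simp only [hqdef, h, dif_pos]
        rw [EuclideanSpace.inner_single_right]; simp
      rw [h, this, inner_zero_right]
      exact hu.2 i0
    · have hn : 0 < ‖p j‖ := norm_pos_iff.mpr h
      have : ⟪u, q j⟫ = ‖p j‖⁻¹ * ⟪u, p j⟫ := by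
        simp only [hqdef, h, dif_neg, not_false_iff]
        exact real_inner_smul_right u (p j) _
      rw [this]
      exact le_mul_of_one_le_left hup ((one_le_inv₀ hn).mpr (hnorm j))
  -- integrability of the rescaled sup
  have hint : Integrable (fun u => ⨆ j, ⟪u, q j⟫) μ := by
    refine Integrable.mono' (integrable_const (1:ℝ))
      (continuous_sup_inner q).aestronglyMeasurable ?_
    exact haebound q (fun j => (hq1 j).le)
  have hnonneg : ∀ᵐ u ∂μ, 0 ≤ ⨆ j, ⟪u, p j⟫ := by
    filter_upwards [hsupp] with u hu
    refine le_ciSup_of_le (Set.Finite.bddAbove (Set.finite_range _))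
      (Classical.arbitrary (Fin P)) ?_
    rw [PiLp.inner_apply]
    exact Finset.sum_nonneg fun i _ => by
      simpa using mul_nonneg (hpos _ i) (hu.2 i)
  have key : (∫ u, ⨆ j, ⟪u, p j⟫ ∂μ) ≤ ∫ u, ⨆ j, ⟪u, q j⟫ ∂μ :=
    integral_mono_of_nonneg hnonneg hint hle
  exact key.trans (le_csSup hbddG ⟨q, hq1, rfl⟩)
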